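/- Let a ∈ M_n(F_q) have rank r. Then K_n(a, 0) := ∑_{x ∈ GL_n(F_q)} φ(tr(a x)) = (−1)^r q^{−r(r+1)/2} q^{r n} |GL_{n−r}(F_q)|. -/

import Mathlib

open Matrix Finset

section KloostermanAux

variable {F : Type*} [Field F] [Fintype F] [DecidableEq F]

lemma sum_units_eq {n : ℕ} (f : Matrix (Fin n) (Fin n) F → ℂ) :
    ∑ x : GL (Fin n) F, f ↑x
      = ∑ x : Matrix (Fin n) (Fin n) F, if IsUnit x then f x else 0 := by
  classical
  rw [← Finset.sum_filter]
  rw [Finset.sum_subtype (p := fun x : Matrix (Fin n) (Fin n) F => IsUnit x)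
    (Finset.univ.filter IsUnit) (by simp) (fun x => f x)]
  exact Fintype.sum_equiv
    { toFun := fun u : GL (Fin n) F =>
        (⟨u, u.isUnit⟩ : {x : Matrix (Fin n) (Fin n) F // IsUnit x})
      invFun := fun x => x.2.unit
      left_inv := fun u => Units.ext u.isUnit.unit_spec
      right_inv := fun x => Subtype.ext x.2.unit_spec }
    (fun u => f ↑u) (fun x => f x.1) (fun u => rfl)
lemma sum_conj_eq {n : ℕ} (φ : AddChar F ℂ) (a : Matrix (Fin n) (Fin n) F)
    (P Q : (Matrix (Fin n) (Fin n) F)ˣ) :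
    ∑ x : GL (Fin n) F,
        φ (Matrix.trace (((P : Matrix (Fin n) (Fin n) F) * a * (Q : Matrix (Fin n) (Fin n) F))
          * (x : Matrix (Fin n) (Fin n) F)))
      = ∑ x : GL (Fin n) F, φ (Matrix.trace (a * (x : Matrix (Fin n) (Fin n) F))) := by
  refine Fintype.sum_equiv ((Equiv.mulLeft Q).trans (Equiv.mulRight P)) _ _ (fun x => ?_)
  simp only [Equiv.trans_apply, Equiv.coe_mulLeft, Equiv.coe_mulRight, Units.val_mul]
  congr 1
  set p := (P : Matrix (Fin n) (Fin n) F)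
  set q := (Q : Matrix (Fin n) (Fin n) F)
  set xx := (x : Matrix (Fin n) (Fin n) F)
  rw [mul_assoc, mul_assoc, Matrix.trace_mul_comm, mul_assoc]
lemma diagonal_eq_units_mul {n r : ℕ} (D : Fin n → F)
    (hcard : Fintype.card {i // D i ≠ 0} = r) :
    ∃ P Q : (Matrix (Fin n) (Fin n) F)ˣ,
      diagonal D
        = (P : Matrix (Fin n) (Fin n) F)
            * diagonal (fun i : Fin n => if (i : ℕ) < r then (1 : F) else 0)
            * (Q : Matrix (Fin n) (Fin n) F) := by
  classical
  have hrn : r ≤ n := by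
    rw [← hcard]
    simpa using Fintype.card_subtype_le (fun i : Fin n => D i ≠ 0)
  have hc1 : Fintype.card {i : Fin n // (i : ℕ) < r} = r := by
    rw [Fintype.card_congr
      (⟨fun i => ⟨i.1, i.2⟩, fun j => ⟨⟨j.1, lt_of_lt_of_le j.2 hrn⟩, j.2⟩,
        fun i => Subtype.ext (Fin.ext rfl), fun j => Fin.ext rfl⟩ :
        {i : Fin n // (i : ℕ) < r} ≃ Fin r)]
    exact Fintype.card_fin r
  set p : Fin n → Prop := fun i => (i : ℕ) < r with hp
  set q : Fin n → Prop := fun i => D i ≠ 0 with hq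
  have hpq : Fintype.card {i // p i} = Fintype.card {i // q i} := hc1.trans hcard.symm
  have hpq' : Fintype.card {i // ¬ p i} = Fintype.card {i // ¬ q i} := by
    rw [Fintype.card_subtype_compl, Fintype.card_subtype_compl, hpq]
  let σ : Fin n ≃ Fin n :=
    (Equiv.sumCompl p).symm.trans
      (((Fintype.equivOfCardEq hpq).sumCongr (Fintype.equivOfCardEq hpq')).trans
        (Equiv.sumCompl q))
  have key : ∀ i, q (σ i) ↔ p i := by
    intro i
    by_cases h : p i
    · simp only [σ, Equiv.trans_apply, Equiv.sumCompl_symm_apply_of_pos h,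
        Equiv.sumCongr_apply, Sum.map_inl, Equiv.sumCompl_apply_inl]
      exact iff_of_true ((Fintype.equivOfCardEq hpq) ⟨i, h⟩).2 h
    · simp only [σ, Equiv.trans_apply, Equiv.sumCompl_symm_apply_of_neg h,
        Equiv.sumCongr_apply, Sum.map_inr, Equiv.sumCompl_apply_inr]
      exact iff_of_false ((Fintype.equivOfCardEq hpq') ⟨i, h⟩).2 h
  set w : Fin n → F := fun i => if (i : ℕ) < r then (1 : F) else 0 with hw
  set χ : Fin n → F := fun i => if D i ≠ 0 then (1 : F) else 0 with hχ
  have hχw : χ = w ∘ ⇑σ.symm := by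
    funext j
    have : p (σ.symm j) ↔ q j := by rw [← key (σ.symm j), Equiv.apply_symm_apply]
    simp only [hχ, hw, Function.comp_apply]
    by_cases h : D j ≠ 0
    · rw [if_pos h, if_pos (by exact this.mpr h)]
    · rw [if_neg h, if_neg (by exact fun hc => h (this.mp hc))]
  set Pm : Matrix (Fin n) (Fin n) F := (1 : Matrix (Fin n) (Fin n) F).submatrix ⇑σ.symm ⇑(Equiv.refl (Fin n)) with hPm
  set Qm : Matrix (Fin n) (Fin n) F := (1 : Matrix (Fin n) (Fin n) F).submatrix ⇑(Equiv.refl (Fin n)) ⇑σ.symm with hQm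
  have hPQ : Pm * Qm = 1 := by
    rw [hPm, hQm, Matrix.submatrix_mul_equiv (1 : Matrix (Fin n) (Fin n) F) 1 _ (Equiv.refl (Fin n)) _,
      one_mul, Matrix.submatrix_one _ σ.symm.injective]
  have hQP : Qm * Pm = 1 := by
    rw [hPm, hQm, Matrix.submatrix_mul_equiv (1 : Matrix (Fin n) (Fin n) F) 1 _ σ.symm _,
      one_mul, Equiv.coe_refl, Matrix.submatrix_id_id]
  have hmid : diagonal χ = Pm * diagonal w * Qm := by
    have h2 : diagonal w * Qm = (diagonal w).submatrix ⇑(Equiv.refl (Fin n)) ⇑σ.symm := by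
      conv_lhs => rw [show diagonal w = (diagonal w).submatrix ⇑(Equiv.refl (Fin n)) ⇑(Equiv.refl (Fin n)) by
        rw [Equiv.coe_refl, Matrix.submatrix_id_id]]
      rw [hQm, Matrix.submatrix_mul_equiv (diagonal w) 1 _ (Equiv.refl (Fin n)) _, mul_one]
    rw [mul_assoc, h2, hPm,
      Matrix.submatrix_mul_equiv (1 : Matrix (Fin n) (Fin n) F) (diagonal w) _ (Equiv.refl (Fin n)) _,
      one_mul, Matrix.submatrix_diagonal w _ σ.symm.injective, hχw]
  set D' : Fin n → F := fun i => if D i = 0 then 1 else D i with hD'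
  have hDsplit : diagonal D = diagonal D' * diagonal χ := by
    have hfun : (fun i => D' i * χ i) = D := by
      funext i
      by_cases h : D i = 0 <;> simp [hD', hχ, h]
    rw [Matrix.diagonal_mul_diagonal]
    exact (congrArg diagonal hfun).symm
  have hD'unit : IsUnit (diagonal D') := by
    rw [Matrix.isUnit_iff_isUnit_det, Matrix.det_diagonal]
    refine isUnit_iff_ne_zero.mpr (Finset.prod_ne_zero_iff.mpr fun i _ => ?_)
    by_cases h : D i = 0 <;> simp [hD', h]
  refine ⟨hD'unit.unit * ⟨Pm, Qm, hPQ, hQP⟩, ⟨Qm, Pm, hQP, hPQ⟩, ?_⟩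
  rw [Units.val_mul, IsUnit.unit_spec]
  show diagonal D = diagonal D' * Pm * diagonal w * Qm
  rw [hDsplit, hmid]
  noncomm_ring
lemma exists_units_decomp {n : ℕ} (a : Matrix (Fin n) (Fin n) F) (r : ℕ) (hr : a.rank = r) :
    ∃ P Q : (Matrix (Fin n) (Fin n) F)ˣ,
      a = (P : Matrix (Fin n) (Fin n) F)
            * diagonal (fun i : Fin n => if (i : ℕ) < r then (1 : F) else 0)
            * (Q : Matrix (Fin n) (Fin n) F) := by
  classical
  obtain ⟨L, L', D, h⟩ := Matrix.Pivot.exists_list_transvec_mul_mul_list_transvec_eq_diagonal a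
  set Lp : Matrix (Fin n) (Fin n) F := (L.map Matrix.TransvectionStruct.toMatrix).prod with hLp
  set Lp' : Matrix (Fin n) (Fin n) F := (L'.map Matrix.TransvectionStruct.toMatrix).prod with hLp'
  have hdetL : Lp.det = 1 := Matrix.TransvectionStruct.det_toMatrix_prod L
  have hdetL' : Lp'.det = 1 := Matrix.TransvectionStruct.det_toMatrix_prod L'
  have hUL : IsUnit Lp := (Matrix.isUnit_iff_isUnit_det _).mpr (by rw [hdetL]; exact isUnit_one)
  have hUL' : IsUnit Lp' := (Matrix.isUnit_iff_isUnit_det _).mpr (by rw [hdetL']; exact isUnit_one)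
  have hrank : Fintype.card {i // D i ≠ 0} = r := by
    have h1 : (Lp * a * Lp').rank = a.rank := by
      rw [Matrix.rank_mul_eq_left_of_isUnit_det Lp' (Lp * a) (by rw [hdetL']; exact isUnit_one),
        Matrix.rank_mul_eq_right_of_isUnit_det Lp a (by rw [hdetL]; exact isUnit_one)]
    rw [← hr, ← h1, h, Matrix.rank_diagonal]
  obtain ⟨P₀, Q₀, hD⟩ := diagonal_eq_units_mul D hrank
  refine ⟨hUL.unit⁻¹ * P₀, Q₀ * hUL'.unit⁻¹, ?_⟩
  have ha : a = (↑hUL.unit⁻¹ : Matrix (Fin n) (Fin n) F) * diagonal D * (↑hUL'.unit⁻¹ : Matrix (Fin n) (Fin n) F) := by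
    rw [← h]
    calc a
        = ((↑hUL.unit⁻¹ : Matrix (Fin n) (Fin n) F) * Lp) * a * (Lp' * (↑hUL'.unit⁻¹ : Matrix (Fin n) (Fin n) F)) := by
          rw [hUL.val_inv_mul, hUL'.mul_val_inv, one_mul, mul_one]
      _ = (↑hUL.unit⁻¹ : Matrix (Fin n) (Fin n) F) * (Lp * a * Lp') * (↑hUL'.unit⁻¹ : Matrix (Fin n) (Fin n) F) := by
          noncomm_ring
  rw [ha, hD, Units.val_mul, Units.val_mul]
  noncomm_ring
lemma sum_phi_zero {m : ℕ} (φ : AddChar F ℂ) (hφ : φ ≠ 1) :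
    ∑ v : Fin (m+1) → F, (φ (v 0) : ℂ) = 0 := by
  have hφ0 : φ ≠ 0 := fun h => hφ (h.trans AddChar.one_eq_zero.symm)
  rw [← (Fin.consEquiv (fun _ : Fin (m+1) => F)).sum_comp (fun v => (φ (v 0) : ℂ))]
  rw [Fintype.sum_prod_type]
  have : ∀ c : F, ∀ w : Fin m → F, ((Fin.consEquiv (fun _ : Fin (m+1) => F)) (c, w)) 0 = c := by
    intro c w; rfl
  simp only [this]
  simp only [Finset.sum_const, nsmul_eq_mul]
  rw [← Finset.mul_sum, AddChar.sum_eq_zero_iff_ne_zero.mpr hφ0, mul_zero]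
open Classical in
lemma inner_v_sum {m : ℕ} (φ : AddChar F ℂ) (hφ : φ ≠ 1)
    (R : Fin m → (Fin (m+1) → F)) (hR : LinearIndependent F R) :
    ∑ v : Fin (m+1) → F,
        (if v ∈ Submodule.span F (Set.range R) then (0:ℂ) else φ (v 0))
      = if ∀ i, R i 0 = 0 then -((Fintype.card F : ℂ))^m else 0 := by
  classical
  set W := Submodule.span F (Set.range R) with hW
  have hsplit : ∑ v : Fin (m+1) → F, (if v ∈ W then (0:ℂ) else φ (v 0))
      = (∑ v : Fin (m+1) → F, (φ (v 0) : ℂ))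
        - ∑ v : Fin (m+1) → F, (if v ∈ W then (φ (v 0) : ℂ) else 0) := by
    rw [← Finset.sum_sub_distrib]
    refine Finset.sum_congr rfl fun v _ => ?_
    by_cases h : v ∈ W <;> simp [h]
  have hsub : ∑ v : Fin (m+1) → F, (if v ∈ W then (φ (v 0) : ℂ) else 0)
      = ∑ w : W, (φ ((w : Fin (m+1) → F) 0) : ℂ) := by
    rw [← Finset.sum_filter,
      Finset.sum_subtype (p := fun v : Fin (m+1) → F => v ∈ W)
        (Finset.univ.filter (· ∈ W)) (by simp) (fun v => (φ (v 0) : ℂ))]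
  rw [hsplit, hsub, sum_phi_zero φ hφ]
  by_cases h : ∀ i, R i 0 = 0
  · rw [if_pos h]
    have hker : ∀ w : W, (w : Fin (m+1) → F) 0 = 0 := by
      intro w
      have hle : W ≤ LinearMap.ker (LinearMap.proj (R := F) (φ := fun _ : Fin (m+1) => F) 0) := by
        rw [hW, Submodule.span_le]
        rintro _ ⟨i, rfl⟩
        simpa [LinearMap.mem_ker] using h i
      simpa [LinearMap.mem_ker] using hle w.2
    have hcardW : (Fintype.card W : ℂ) = (Fintype.card F : ℂ)^m := by
      have h1 : Fintype.card W = Fintype.card F ^ Module.finrank F W :=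
        Module.card_eq_pow_finrank
      have h2 : Module.finrank F W = m := by
        rw [hW, finrank_span_eq_card hR, Fintype.card_fin]
      rw [h1, h2]; norm_cast
    simp only [hker, AddChar.map_zero_eq_one]
    rw [Finset.sum_const, Finset.card_univ, nsmul_eq_mul, mul_one, hcardW]
    ring
  · rw [if_neg h]
    push_neg at h
    obtain ⟨i, hi⟩ := h
    obtain ⟨t, ht⟩ := AddChar.ne_one_iff.mp hφ
    set w₀ : W := ⟨(t * (R i 0)⁻¹) • R i,
      Submodule.smul_mem _ _ (Submodule.subset_span (Set.mem_range_self i))⟩ with hw₀def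
    have hw₀ : (w₀ : Fin (m+1) → F) 0 = t := by
      simp [hw₀def, Pi.smul_apply, smul_eq_mul, mul_assoc, inv_mul_cancel₀ hi]
    have key : φ ((w₀ : Fin (m+1) → F) 0) * (∑ w : W, (φ ((w : Fin (m+1) → F) 0) : ℂ))
        = ∑ w : W, (φ ((w : Fin (m+1) → F) 0) : ℂ) := by
      rw [Finset.mul_sum]
      refine Fintype.sum_equiv (Equiv.addLeft w₀) _ _ fun w => ?_
      have : ((w₀ + w : W) : Fin (m+1) → F) 0 = (w₀ : Fin (m+1) → F) 0 + (w : Fin (m+1) → F) 0 := rfl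
      rw [Equiv.coe_addLeft, this, AddChar.map_add_eq_mul]
    have hne : φ ((w₀ : Fin (m+1) → F) 0) ≠ 1 := by rw [hw₀]; exact ht
    rw [eq_zero_of_mul_eq_self_left hne key]
    ring
open Classical in
lemma key_rec {m s : ℕ} (φ : AddChar F ℂ) (hφ : φ ≠ 1) :
    (∑ x : Matrix (Fin (m+1)) (Fin (m+1)) F,
        if IsUnit x then (φ (∑ i : Fin (m+1), if (i:ℕ) < s+1 then x i i else 0) : ℂ) else 0)
      = -((Fintype.card F : ℂ))^m *
        ∑ y : Matrix (Fin m) (Fin m) F,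
          if IsUnit y then (φ (∑ i : Fin m, if (i:ℕ) < s then y i i else 0) : ℂ) else 0 := by
  classical
  set q : ℂ := (Fintype.card F : ℂ) with hq
  -- the linear map prepending a zero
  let g : (Fin m → F) →ₗ[F] (Fin (m+1) → F) :=
    { toFun := fun w => Fin.cons 0 w
      map_add' := by
        intro w w'; funext j
        refine Fin.cases ?_ (fun j => ?_) j <;> simp
      map_smul' := by
        intro c w; funext j
        refine Fin.cases ?_ (fun j => ?_) j <;> simp }
  let c : (Fin m → Fin (m+1) → F) → F := fun R => ∑ i : Fin m, if (i:ℕ) < s then R i i.succ else 0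
  let E : Matrix (Fin (m+1)) (Fin (m+1)) F ≃ ((Fin (m+1) → F) × (Fin m → Fin (m+1) → F)) :=
    (Matrix.of (m := Fin (m+1)) (n := Fin (m+1)) (α := F)).symm.trans
      (Fin.consEquiv (fun _ : Fin (m+1) => Fin (m+1) → F)).symm
  rw [← E.symm.sum_comp (fun x => if IsUnit x then
      (φ (∑ i : Fin (m+1), if (i:ℕ) < s+1 then x i i else 0) : ℂ) else 0),
    Fintype.sum_prod_type]
  have hterm : ∀ (v : Fin (m+1) → F) (R : Fin m → Fin (m+1) → F),
      (if IsUnit (E.symm (v, R)) then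
          (φ (∑ i : Fin (m+1), if (i:ℕ) < s+1 then (E.symm (v,R)) i i else 0) : ℂ) else 0)
      = if LinearIndependent F R then
          (if v ∈ Submodule.span F (Set.range R) then 0 else (φ (v 0):ℂ)) * φ (c R)
        else 0 := by
    intro v R
    have hx : E.symm (v, R) = Matrix.of (Fin.cons v R) := rfl
    have hU : IsUnit (E.symm (v, R))
        ↔ (LinearIndependent F R ∧ v ∉ Submodule.span F (Set.range R)) := by
      rw [hx, ← Matrix.linearIndependent_rows_iff_isUnit]
      exact linearIndependent_fin_cons
    have htr : (∑ i : Fin (m+1), if (i:ℕ) < s+1 then (E.symm (v,R)) i i else 0)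
        = v 0 + c R := by
      rw [hx, Fin.sum_univ_succ]
      congr 1
      · refine Finset.sum_congr rfl fun i _ => ?_
        have h1 : ((i.succ : Fin (m+1)) : ℕ) = (i:ℕ)+1 := rfl
        rw [h1]
        by_cases h : (i:ℕ) < s
        · rw [if_pos (by omega), if_pos h]
          simp
        · rw [if_neg (by omega), if_neg h]
    by_cases hLI : LinearIndependent F R
    · by_cases hv : v ∈ Submodule.span F (Set.range R)
      · rw [if_neg (fun hu => (hU.mp hu).2 hv), if_pos hLI, if_pos hv, zero_mul]
      · rw [if_pos (hU.mpr ⟨hLI, hv⟩), htr, AddChar.map_add_eq_mul, if_pos hLI, if_neg hv]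
    · rw [if_neg (fun hu => hLI (hU.mp hu).1), if_neg hLI]
  simp only [hterm]
  rw [Finset.sum_comm]
  have hrow : ∀ R : Fin m → Fin (m+1) → F,
      (∑ v : Fin (m+1) → F, if LinearIndependent F R then
          (if v ∈ Submodule.span F (Set.range R) then 0 else (φ (v 0):ℂ)) * φ (c R) else 0)
      = if LinearIndependent F R ∧ ∀ i, R i 0 = 0 then -q^m * φ (c R) else 0 := by
    intro R
    by_cases hLI : LinearIndependent F R
    · simp only [if_pos hLI]
      rw [← Finset.sum_mul, inner_v_sum φ hφ R hLI]
      by_cases hz : ∀ i, R i 0 = 0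
      · rw [if_pos hz, if_pos ⟨hLI, hz⟩, hq]
      · rw [if_neg hz, zero_mul, if_neg (fun h => hz h.2)]
    · rw [if_neg (fun h => hLI h.1)]
      simp [if_neg hLI]
  simp only [hrow]
  let E2 : (Fin m → Fin (m+1) → F) ≃ ((Fin m → F) × (Fin m → Fin m → F)) :=
    { toFun := fun R => (fun i => R i 0, fun i j => R i (j.succ))
      invFun := fun p i => Fin.cons (p.1 i) (p.2 i)
      left_inv := by
        intro R; funext i j
        refine Fin.cases ?_ (fun j => ?_) j <;> simp
      right_inv := by
        rintro ⟨c0, y⟩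
        refine Prod.ext ?_ ?_
        · funext i; simp
        · funext i j; simp }
  rw [← E2.symm.sum_comp (fun R =>
      if LinearIndependent F R ∧ ∀ i, R i 0 = 0 then -q^m * φ (c R) else 0),
    Fintype.sum_prod_type, Finset.sum_comm]
  have hcol : ∀ y : Fin m → Fin m → F,
      (∑ c0 : Fin m → F,
        if LinearIndependent F (E2.symm (c0, y)) ∧ ∀ i, (E2.symm (c0, y)) i 0 = 0 then
          -q^m * φ (c (E2.symm (c0, y))) else 0)
      = if IsUnit (Matrix.of y) then
          -q^m * φ (∑ i : Fin m, if (i:ℕ) < s then (Matrix.of y) i i else 0) else 0 := by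
    intro y
    rw [Finset.sum_eq_single (0 : Fin m → F)]
    · have h0 : E2.symm ((0 : Fin m → F), y) = fun i => Fin.cons (0:F) (y i) := rfl
      have hz : ∀ i, (E2.symm ((0 : Fin m → F), y)) i 0 = 0 := fun i => by
        rw [h0]; exact Fin.cons_zero _ _
      have hLIiff : LinearIndependent F (E2.symm ((0 : Fin m → F), y)) ↔ IsUnit (Matrix.of y) := by
        rw [h0, ← Matrix.linearIndependent_rows_iff_isUnit]
        have hcomp : (fun i => Fin.cons (0:F) (y i))
            = ⇑g ∘ (fun i => Matrix.of y i) := rfl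
        constructor
        · intro hli
          exact LinearIndependent.of_comp g (by exact hli)
        · intro hy
          have hker : LinearMap.ker g = ⊥ := by
            rw [LinearMap.ker_eq_bot]
            intro w w' hww'
            have h2 := congrArg Fin.tail hww'
            simpa [g, Fin.tail_cons] using h2
          rw [hcomp]
          exact LinearIndependent.map' hy g hker
      have hcsum : c (E2.symm ((0 : Fin m → F), y))
          = ∑ i : Fin m, if (i:ℕ) < s then (Matrix.of y) i i else 0 := by
        show (∑ i : Fin m, if (i:ℕ) < s then (E2.symm ((0 : Fin m → F), y)) i i.succ else 0) = _
        refine Finset.sum_congr rfl fun i _ => ?_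
        by_cases h : (i:ℕ) < s
        · simp [h0, h]
        · simp [h]
      by_cases hy : IsUnit (Matrix.of y)
      · rw [if_pos ⟨hLIiff.mpr hy, hz⟩, if_pos hy, hcsum]
      · rw [if_neg (fun h => hy (hLIiff.mp h.1)), if_neg hy]
    · intro c0 _ hne
      refine if_neg ?_
      rintro ⟨-, hzz⟩
      refine hne (funext fun i => ?_)
      have := hzz i
      exact this
    · intro h0
      exact absurd (Finset.mem_univ _) h0
  simp only [hcol]
  rw [Finset.mul_sum]
  refine Fintype.sum_equiv (Matrix.of (m := Fin m) (n := Fin m) (α := F)) _ _ (fun x => ?_)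
  by_cases hx : IsUnit (Matrix.of x)
  · rw [if_pos hx, if_pos hx]
  · rw [if_neg hx, if_neg hx, mul_zero]
lemma T_val (φ : AddChar F ℂ) (hφ : φ ≠ 1) :
    ∀ r n : ℕ, r ≤ n →
    (∑ x : GL (Fin n) F,
        φ (∑ i : Fin n, if (i:ℕ) < r then (x : Matrix (Fin n) (Fin n) F) i i else 0))
      = (-1)^r * (Fintype.card F : ℂ)^(r*n) / (Fintype.card F : ℂ)^(r*(r+1)/2)
          * (Fintype.card (GL (Fin (n-r)) F) : ℂ) := by
  intro r
  induction r with
  | zero =>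
    intro n _
    have h0 : ∀ x : GL (Fin n) F,
        (φ (∑ i : Fin n, if (i:ℕ) < 0 then (x : Matrix (Fin n) (Fin n) F) i i else 0) : ℂ) = 1 := by
      intro x
      rw [Finset.sum_eq_zero (fun i _ => if_neg (Nat.not_lt_zero _)), AddChar.map_zero_eq_one]
    rw [Finset.sum_congr rfl (fun x _ => h0 x)]
    simp
  | succ s IH =>
    intro n hr
    obtain ⟨m, rfl⟩ : ∃ m, n = m + 1 := ⟨n - 1, by omega⟩
    rw [sum_units_eq (fun x : Matrix (Fin (m+1)) (Fin (m+1)) F =>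
        (φ (∑ i : Fin (m+1), if (i:ℕ) < s+1 then x i i else 0) : ℂ)),
      key_rec φ hφ,
      ← sum_units_eq (fun y : Matrix (Fin m) (Fin m) F =>
        (φ (∑ i : Fin m, if (i:ℕ) < s then y i i else 0) : ℂ)),
      IH m (by omega)]
    rw [Nat.succ_sub_succ]
    set q : ℂ := (Fintype.card F : ℂ) with hqdef
    have hq0 : q ≠ 0 := Nat.cast_ne_zero.mpr Fintype.card_ne_zero
    set C : ℂ := (Fintype.card (GL (Fin (m - s)) F) : ℂ) with hC
    have e1 : (s+1)*(m+1) = s*m + m + (s+1) := by ring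
    have e2 : (s+1)*((s+1)+1)/2 = s*(s+1)/2 + (s+1) := by
      have h : (s+1)*((s+1)+1) = s*(s+1) + 2*(s+1) := by ring
      rw [h, Nat.add_mul_div_left _ _ (by norm_num : 0 < 2)]
    rw [e1, e2, pow_add, pow_add, pow_add]
    field_simp
    ring

end KloostermanAux

/-- If `a` has rank `r` then
`K_n(a,0) = ∑_{x ∈ GL_n} φ(tr(a x)) = (-1)^r q^{-r(r+1)/2} q^{rn} |GL_{n-r}(F_q)|`. -/
theorem kloosterman_b_eq_zero {F : Type*} [Field F] [Fintype F] [DecidableEq F]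
    {n : ℕ} (φ : AddChar F ℂ) (hφ : φ ≠ 1)
    (a : Matrix (Fin n) (Fin n) F) (r : ℕ) (hr : a.rank = r) :
    (∑ x : GL (Fin n) F, φ (Matrix.trace (a * (x : Matrix (Fin n) (Fin n) F)))) =
      (-1) ^ r * (Fintype.card F : ℂ) ^ (r * n) / (Fintype.card F : ℂ) ^ (r * (r + 1) / 2) *
        (Fintype.card (GL (Fin (n - r)) F) : ℂ) := by
  classical
  have hrn : r ≤ n := by
    rw [← hr]
    simpa using a.rank_le_card_width
  obtain ⟨P, Q, hdec⟩ := exists_units_decomp a r hr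
  rw [hdec, sum_conj_eq φ _ P Q]
  have htr : ∀ x : Matrix (Fin n) (Fin n) F,
      Matrix.trace (diagonal (fun i : Fin n => if (i : ℕ) < r then (1:F) else 0) * x)
        = ∑ i : Fin n, if (i : ℕ) < r then x i i else 0 := by
    intro x
    simp [Matrix.trace, Matrix.diag, Matrix.diagonal_mul, ite_mul]
  simp only [htr]
  exact T_val φ hφ r n hrn
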